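/- (d = 2 box duality, finite I) Let ν_1, ν_2 be Borel probability measures on ℝ, B = (−∞,B_1]×(−∞,B_2], and for i = 1,...,n let A^i = (−∞,A^i_1]×(−∞,A^i_2] with π̄^i ∈ [0,1]. Let Q_0 be the set of sub-probability measures μ on ℝ² with μ_1(E) ≤ ν_1(E), μ_2(E) ≤ ν_2(E) for all Borel E ⊆ ℝ and μ(A^i) ≤ π̄^i for all i. Then max_{μ ∈ Q_0} μ(B) = min( ν_1((−∞,B_1]), ν_2((−∞,B_2]), min_{i=1,...,n} { π̄^i + ν_1((A^i_1, B_1]) + ν_2((A^i_2, B_2]) } ), where intervals (a,b] with b ≤ a are empty. -/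

import Mathlib

open MeasureTheory Set ProbabilityTheory Filter

noncomputable def boxQ (ν : Measure ℝ) (t : ℝ) : ℝ := sInf {x | t ≤ cdf ν x}

section Quantile
variable (ν : Measure ℝ) [IsProbabilityMeasure ν]

omit [IsProbabilityMeasure ν] in
lemma boxQ_set_nonempty {t : ℝ} (ht : t < 1) : {x | t ≤ cdf ν x}.Nonempty := by
  obtain ⟨x, hx⟩ := ((tendsto_cdf_atTop ν).eventually (eventually_ge_nhds ht)).exists
  exact ⟨x, hx⟩

omit [IsProbabilityMeasure ν] in
lemma boxQ_set_bddBelow {t : ℝ} (ht : 0 < t) : BddBelow {x | t ≤ cdf ν x} := by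
  obtain ⟨y, hy⟩ := ((tendsto_cdf_atBot ν).eventually (eventually_lt_nhds ht)).exists
  refine ⟨y, fun x hx => ?_⟩
  by_contra h
  exact absurd (le_trans hx (monotone_cdf ν (le_of_not_ge h))) (not_le.2 hy)

omit [IsProbabilityMeasure ν] in
lemma boxQ_le_iff {t x : ℝ} (ht : t ∈ Ioo (0:ℝ) 1) : boxQ ν t ≤ x ↔ t ≤ cdf ν x := by
  constructor
  · intro h
    rw [← (cdf ν).iInf_Ioi_eq x]
    refine le_ciInf fun r => ?_
    obtain ⟨z, hz, hzr⟩ := exists_lt_of_csInf_lt (boxQ_set_nonempty ν ht.2) (lt_of_le_of_lt h r.2)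
    exact le_trans hz (monotone_cdf ν hzr.le)
  · intro h
    exact csInf_le (boxQ_set_bddBelow ν ht.1) h

omit [IsProbabilityMeasure ν] in
lemma boxQ_monotoneOn : MonotoneOn (boxQ ν) (Ioo (0:ℝ) 1) := by
  intro s hs t ht hst
  exact csInf_le_csInf (boxQ_set_bddBelow ν hs.1) (boxQ_set_nonempty ν ht.2)
    (fun x hx => le_trans hst hx)

omit [IsProbabilityMeasure ν] in
lemma boxQ_aemeasurable : AEMeasurable (boxQ ν) (volume.restrict (Ioo (0:ℝ) 1)) :=
  aemeasurable_restrict_of_monotoneOn measurableSet_Ioo (boxQ_monotoneOn ν)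

lemma volume_inter_Ioo01 {c : ℝ} (h1 : c ≤ 1) :
    volume (Iic c ∩ Ioo (0:ℝ) 1) = ENNReal.ofReal c := by
  apply le_antisymm
  · calc volume (Iic c ∩ Ioo (0:ℝ) 1) ≤ volume (Ioc 0 c) := by
          apply measure_mono
          rintro t ⟨h1', h2'⟩
          exact ⟨h2'.1, h1'⟩
        _ = ENNReal.ofReal c := by rw [Real.volume_Ioc, sub_zero]
  · calc ENNReal.ofReal c = volume (Ioo 0 c) := by rw [Real.volume_Ioo, sub_zero]
        _ ≤ volume (Iic c ∩ Ioo (0:ℝ) 1) := by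
          apply measure_mono
          rintro t ⟨h1', h2'⟩
          exact ⟨h2'.le, h1', lt_of_lt_of_le h2' h1⟩

lemma map_boxQ : Measure.map (boxQ ν) (volume.restrict (Ioo (0:ℝ) 1)) = ν := by
  have hfin : IsFiniteMeasure (Measure.map (boxQ ν) (volume.restrict (Ioo (0:ℝ) 1))) := by
    constructor
    rw [Measure.map_apply_of_aemeasurable (boxQ_aemeasurable ν) MeasurableSet.univ]
    simp [Real.volume_Ioo]
  refine Measure.ext_of_Iic _ _ fun x => ?_
  rw [Measure.map_apply_of_aemeasurable (boxQ_aemeasurable ν) measurableSet_Iic,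
    Measure.restrict_apply' measurableSet_Ioo]
  have hset : boxQ ν ⁻¹' Iic x ∩ Ioo (0:ℝ) 1 = Iic (cdf ν x) ∩ Ioo (0:ℝ) 1 := by
    ext t
    simp only [mem_inter_iff, mem_preimage, mem_Iic, and_congr_left_iff]
    intro ht
    exact boxQ_le_iff ν ht
  rw [hset, volume_inter_Ioo01 (cdf_le_one ν x), ofReal_cdf]

lemma boxQ_pushforward_eq {E : Set ℝ} (hE : MeasurableSet E) :
    volume (boxQ ν ⁻¹' E ∩ Ioo (0:ℝ) 1) = ν E := by
  have h := Measure.map_apply_of_aemeasurable (boxQ_aemeasurable ν) hE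
  rw [map_boxQ ν, Measure.restrict_apply' measurableSet_Ioo] at h
  exact h.symm

lemma ioc_toReal (A B : ℝ) : (ν (Ioc A B)).toReal = max (cdf ν B - cdf ν A) 0 := by
  rcases le_or_gt A B with h | h
  · have hIoc : Ioc A B = Iic B \ Iic A := (Iic_sdiff_Iic).symm
    rw [hIoc, measure_diff (Iic_subset_Iic.2 h) measurableSet_Iic.nullMeasurableSet
      (measure_ne_top ν _),
      ENNReal.toReal_sub_of_le (measure_mono (Iic_subset_Iic.2 h)) (measure_ne_top ν _)]
    rw [cdf_eq_real, cdf_eq_real]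
    have hle : (ν (Iic A)).toReal ≤ (ν (Iic B)).toReal :=
      ENNReal.toReal_mono (measure_ne_top ν _) (measure_mono (Iic_subset_Iic.2 h))
    exact (max_eq_left (sub_nonneg.2 hle)).symm
  · rw [Ioc_eq_empty h.not_gt, measure_empty]
    simp only [ENNReal.toReal_zero]
    exact (max_eq_right (sub_nonpos.2 (monotone_cdf ν h.le))).symm

end Quantile

/-- Explicit box duality in dimension 2 with finitely many constraints:
`max_{μ ∈ Q₀} μ(B) = min(ν₁((−∞,B₁]), ν₂((−∞,B₂]), min_i {π̄^i + ν₁((A₁^i,B₁]) + ν₂((A₂^i,B₂])})`. -/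
theorem box_duality_dim_two {n : ℕ}
    (ν₁ ν₂ : Measure ℝ) [IsProbabilityMeasure ν₁] [IsProbabilityMeasure ν₂]
    (B₁ B₂ : ℝ) (A₁ A₂ : Fin n → ℝ) (πhi : Fin n → ℝ)
    (hπ : ∀ i, πhi i ∈ Set.Icc (0 : ℝ) 1) :
    IsGreatest
      {v : ℝ | ∃ μ : Measure (Fin 2 → ℝ), μ Set.univ ≤ 1 ∧
        (∀ E : Set ℝ, MeasurableSet E →
          μ {y : Fin 2 → ℝ | y 0 ∈ E} ≤ ν₁ E ∧ μ {y : Fin 2 → ℝ | y 1 ∈ E} ≤ ν₂ E) ∧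
        (∀ i, (μ {y : Fin 2 → ℝ | y 0 ≤ A₁ i ∧ y 1 ≤ A₂ i}).toReal ≤ πhi i) ∧
        v = (μ {y : Fin 2 → ℝ | y 0 ≤ B₁ ∧ y 1 ≤ B₂}).toReal}
      (sInf (insert ((ν₁ (Set.Iic B₁)).toReal)
        (insert ((ν₂ (Set.Iic B₂)).toReal)
          (Set.range fun i =>
            πhi i + (ν₁ (Set.Ioc (A₁ i) B₁)).toReal + (ν₂ (Set.Ioc (A₂ i) B₂)).toReal)))) := by
  classical
  set S : Set ℝ := insert ((ν₁ (Set.Iic B₁)).toReal)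
      (insert ((ν₂ (Set.Iic B₂)).toReal)
        (Set.range fun i =>
          πhi i + (ν₁ (Set.Ioc (A₁ i) B₁)).toReal + (ν₂ (Set.Ioc (A₂ i) B₂)).toReal)) with hS
  set m : ℝ := sInf S with hm
  set a : ℝ := cdf ν₁ B₁ with haDef
  set b : ℝ := cdf ν₂ B₂ with hbDef
  have haB : a = (ν₁ (Set.Iic B₁)).toReal := cdf_eq_real ν₁ B₁
  have hbB : b = (ν₂ (Set.Iic B₂)).toReal := cdf_eq_real ν₂ B₂
  have hSne : S.Nonempty := ⟨_, Set.mem_insert _ _⟩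
  have hSbdd : BddBelow S :=
    (((Set.finite_range _).insert _).insert _).bddBelow
  have hma : m ≤ a := haB ▸ csInf_le hSbdd (Set.mem_insert _ _)
  have hmb : m ≤ b := hbB ▸ csInf_le hSbdd (Set.mem_insert_of_mem _ (Set.mem_insert _ _))
  have hmi : ∀ i, m ≤ πhi i + (ν₁ (Set.Ioc (A₁ i) B₁)).toReal
      + (ν₂ (Set.Ioc (A₂ i) B₂)).toReal := fun i =>
    csInf_le hSbdd (Set.mem_insert_of_mem _ (Set.mem_insert_of_mem _ ⟨i, rfl⟩))
  have hm0 : 0 ≤ m := by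
    refine le_csInf hSne ?_
    rintro c hc
    rcases hc with rfl | rfl | ⟨i, rfl⟩
    · exact ENNReal.toReal_nonneg
    · exact ENNReal.toReal_nonneg
    · exact add_nonneg (add_nonneg (hπ i).1 ENNReal.toReal_nonneg) ENNReal.toReal_nonneg
  have ha1 : a ≤ 1 := cdf_le_one ν₁ B₁
  have hb1 : b ≤ 1 := cdf_le_one ν₂ B₂
  have mem₁ : ∀ {t : ℝ}, t ∈ Ioo (0:ℝ) m → a - m + t ∈ Ioo (0:ℝ) 1 := by
    intro t ht
    exact ⟨by linarith [ht.1], by linarith [ht.2]⟩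
  have mem₂ : ∀ {t : ℝ}, t ∈ Ioo (0:ℝ) m → b - t ∈ Ioo (0:ℝ) 1 := by
    intro t ht
    exact ⟨by linarith [ht.2], by linarith [ht.1]⟩
  constructor
  · -- membership: the antitone coupling in the upper-right corner of B
    set g : ℝ → (Fin 2 → ℝ) := fun t => ![boxQ ν₁ (a - m + t), boxQ ν₂ (b - t)] with hg
    have hg0 : ∀ t, g t 0 = boxQ ν₁ (a - m + t) := fun t => rfl
    have hg1 : ∀ t, g t 1 = boxQ ν₂ (b - t) := fun t => rfl
    have hgm : AEMeasurable g (volume.restrict (Ioo (0:ℝ) m)) := by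
      have h₀ : AEMeasurable (fun t => boxQ ν₁ (a - m + t)) (volume.restrict (Ioo (0:ℝ) m)) := by
        refine aemeasurable_restrict_of_monotoneOn measurableSet_Ioo ?_
        intro x hx y hy hxy
        exact boxQ_monotoneOn ν₁ (mem₁ hx) (mem₁ hy) (by linarith)
      have h₁ : AEMeasurable (fun t => boxQ ν₂ (b - t)) (volume.restrict (Ioo (0:ℝ) m)) := by
        refine aemeasurable_restrict_of_antitoneOn measurableSet_Ioo ?_
        intro x hx y hy hxy
        exact boxQ_monotoneOn ν₂ (mem₂ hy) (mem₂ hx) (by linarith)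
      obtain ⟨f₀, hf₀, he₀⟩ := h₀
      obtain ⟨f₁, hf₁, he₁⟩ := h₁
      refine ⟨fun t => ![f₀ t, f₁ t], ?_, ?_⟩
      · rw [measurable_pi_iff]
        intro i
        fin_cases i
        · simpa using hf₀
        · simpa using hf₁
      · filter_upwards [he₀, he₁] with t ht₀ ht₁
        funext i
        fin_cases i
        · simpa [hg0] using ht₀
        · simpa [hg1] using ht₁
    set μ : Measure (Fin 2 → ℝ) := Measure.map g (volume.restrict (Ioo (0:ℝ) m)) with hμ
    have happ : ∀ T : Set (Fin 2 → ℝ), MeasurableSet T → μ T = volume (g ⁻¹' T ∩ Ioo (0:ℝ) m) :=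
      fun T hT => by
        rw [hμ, Measure.map_apply_of_aemeasurable hgm hT,
          Measure.restrict_apply' measurableSet_Ioo]
    have hBmeas : MeasurableSet {y : Fin 2 → ℝ | y 0 ≤ B₁ ∧ y 1 ≤ B₂} := by
      exact (measurableSet_le (measurable_pi_apply 0) measurable_const).inter
        (measurableSet_le (measurable_pi_apply 1) measurable_const)
    have hBval : μ {y : Fin 2 → ℝ | y 0 ≤ B₁ ∧ y 1 ≤ B₂} = ENNReal.ofReal m := by
      rw [happ _ hBmeas]
      have : g ⁻¹' {y : Fin 2 → ℝ | y 0 ≤ B₁ ∧ y 1 ≤ B₂} ∩ Ioo (0:ℝ) m = Ioo (0:ℝ) m := by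
        ext t
        simp only [mem_inter_iff, mem_preimage, mem_setOf_eq, hg0, hg1,
          and_iff_right_iff_imp]
        intro ht
        constructor
        · exact (boxQ_le_iff ν₁ (mem₁ ht)).2 (by rw [← haDef]; linarith [ht.2])
        · exact (boxQ_le_iff ν₂ (mem₂ ht)).2 (by rw [← hbDef]; linarith [ht.1])
      rw [this, Real.volume_Ioo, sub_zero]
    refine ⟨μ, ?_, ?_, ?_, ?_⟩
    · -- total mass
      rw [happ _ MeasurableSet.univ, Set.preimage_univ, Set.univ_inter, Real.volume_Ioo,
        sub_zero]
      exact ENNReal.ofReal_le_one.2 (by linarith)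
    · -- marginals
      intro E hE
      constructor
      · have hTm : MeasurableSet {y : Fin 2 → ℝ | y 0 ∈ E} := measurable_pi_apply 0 hE
        rw [happ _ hTm]
        have hset : g ⁻¹' {y : Fin 2 → ℝ | y 0 ∈ E} ∩ Ioo (0:ℝ) m
            = (fun t => a - m + t) ⁻¹' (boxQ ν₁ ⁻¹' E ∩ Ioo (a - m) a) := by
          ext t
          simp only [mem_inter_iff, mem_preimage, mem_setOf_eq, hg0, mem_Ioo]
          constructor
          · rintro ⟨h1, h2, h3⟩; exact ⟨h1, by linarith, by linarith⟩
          · rintro ⟨h1, h2, h3⟩; exact ⟨h1, by linarith, by linarith⟩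
        have htrans : (fun t => a - m + t) = (fun t => (a - m) + t) := rfl
        rw [hset, htrans, measure_preimage_add]
        rw [← boxQ_pushforward_eq ν₁ hE]
        exact measure_mono (Set.inter_subset_inter subset_rfl
          (Ioo_subset_Ioo (by linarith) (by linarith)))
      · have hTm : MeasurableSet {y : Fin 2 → ℝ | y 1 ∈ E} := measurable_pi_apply 1 hE
        rw [happ _ hTm]
        have hset : g ⁻¹' {y : Fin 2 → ℝ | y 1 ∈ E} ∩ Ioo (0:ℝ) m
            = Neg.neg ⁻¹' ((fun t => b + t) ⁻¹' (boxQ ν₂ ⁻¹' E ∩ Ioo (b - m) b)) := by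
          ext t
          simp only [mem_inter_iff, mem_preimage, mem_setOf_eq, hg1, mem_Ioo]
          constructor
          · rintro ⟨h1, h2, h3⟩
            refine ⟨by rw [show b + -t = b - t by ring]; exact h1, by linarith, by linarith⟩
          · rintro ⟨h1, h2, h3⟩
            rw [show b + -t = b - t by ring] at h1
            exact ⟨h1, by linarith, by linarith⟩
        rw [hset, Measure.measure_preimage_neg, measure_preimage_add]
        rw [← boxQ_pushforward_eq ν₂ hE]
        exact measure_mono (Set.inter_subset_inter subset_rfl
          (Ioo_subset_Ioo (by linarith) (by linarith)))
    · -- box constraints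
      intro i
      have hAmeas : MeasurableSet {y : Fin 2 → ℝ | y 0 ≤ A₁ i ∧ y 1 ≤ A₂ i} :=
        (measurableSet_le (measurable_pi_apply 0) measurable_const).inter
          (measurableSet_le (measurable_pi_apply 1) measurable_const)
      set c₁ : ℝ := cdf ν₁ (A₁ i) with hc₁
      set c₂ : ℝ := cdf ν₂ (A₂ i) with hc₂
      have hr₁ : (ν₁ (Set.Ioc (A₁ i) B₁)).toReal = max (a - c₁) 0 := ioc_toReal ν₁ (A₁ i) B₁
      have hr₂ : (ν₂ (Set.Ioc (A₂ i) B₂)).toReal = max (b - c₂) 0 := ioc_toReal ν₂ (A₂ i) B₂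
      have hsub : g ⁻¹' {y : Fin 2 → ℝ | y 0 ≤ A₁ i ∧ y 1 ≤ A₂ i} ∩ Ioo (0:ℝ) m
          ⊆ Icc (max (b - c₂) 0) (min (c₁ - (a - m)) m) := by
        rintro t ⟨ht1, ht2⟩
        simp only [mem_preimage, mem_setOf_eq, hg0, hg1] at ht1
        have e1 := (boxQ_le_iff ν₁ (mem₁ ht2)).1 ht1.1
        have e2 := (boxQ_le_iff ν₂ (mem₂ ht2)).1 ht1.2
        rw [← hc₁] at e1
        rw [← hc₂] at e2
        exact ⟨max_le (by linarith) ht2.1.le, le_min (by linarith) ht2.2.le⟩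
      have hle : μ {y : Fin 2 → ℝ | y 0 ≤ A₁ i ∧ y 1 ≤ A₂ i}
          ≤ ENNReal.ofReal (min (c₁ - (a - m)) m - max (b - c₂) 0) := by
        rw [happ _ hAmeas]
        calc volume (g ⁻¹' {y : Fin 2 → ℝ | y 0 ≤ A₁ i ∧ y 1 ≤ A₂ i} ∩ Ioo (0:ℝ) m)
            ≤ volume (Icc (max (b - c₂) 0) (min (c₁ - (a - m)) m)) := measure_mono hsub
          _ = _ := by rw [Real.volume_Icc]
      have hval : (μ {y : Fin 2 → ℝ | y 0 ≤ A₁ i ∧ y 1 ≤ A₂ i}).toReal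
          ≤ max (min (c₁ - (a - m)) m - max (b - c₂) 0) 0 := by
        rw [← ENNReal.toReal_ofReal']
        exact ENNReal.toReal_mono ENNReal.ofReal_ne_top hle
      refine le_trans hval (max_le ?_ (hπ i).1)
      have hmin : min (c₁ - (a - m)) m = m - max (a - c₁) 0 := by
        rcases le_total (a - c₁) 0 with h | h
        · rw [max_eq_right h, min_eq_right (by linarith), sub_zero]
        · rw [max_eq_left h, min_eq_left (by linarith)]
          ring
      have := hmi i
      rw [hr₁, hr₂] at this
      rw [hmin]
      linarith
    · -- value
      rw [hBval, ENNReal.toReal_ofReal hm0]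
  · -- upper bound
    rintro v ⟨μ, hμ1, hmarg, hA, rfl⟩
    refine le_csInf hSne ?_
    rintro c hc
    have hfinA : ∀ T : Set (Fin 2 → ℝ), μ T ≠ ⊤ := fun T =>
      ((le_trans (measure_mono (Set.subset_univ _)) hμ1).trans_lt ENNReal.one_lt_top).ne
    rcases hc with rfl | rfl | ⟨i, rfl⟩
    · refine ENNReal.toReal_mono (measure_ne_top ν₁ _) ?_
      refine le_trans (measure_mono ?_) (hmarg (Set.Iic B₁) measurableSet_Iic).1
      intro y hy
      exact hy.1
    · refine ENNReal.toReal_mono (measure_ne_top ν₂ _) ?_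
      refine le_trans (measure_mono ?_) (hmarg (Set.Iic B₂) measurableSet_Iic).2
      intro y hy
      exact hy.2
    · have hcover : {y : Fin 2 → ℝ | y 0 ≤ B₁ ∧ y 1 ≤ B₂}
          ⊆ {y : Fin 2 → ℝ | y 0 ≤ A₁ i ∧ y 1 ≤ A₂ i}
            ∪ ({y : Fin 2 → ℝ | y 0 ∈ Set.Ioc (A₁ i) B₁}
              ∪ {y : Fin 2 → ℝ | y 1 ∈ Set.Ioc (A₂ i) B₂}) := by
        rintro y ⟨hy1, hy2⟩
        by_cases hc1 : y 0 ≤ A₁ i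
        · by_cases hc2 : y 1 ≤ A₂ i
          · exact Or.inl ⟨hc1, hc2⟩
          · exact Or.inr (Or.inr ⟨not_le.1 hc2, hy2⟩)
        · exact Or.inr (Or.inl ⟨not_le.1 hc1, hy1⟩)
      have hchain : μ {y : Fin 2 → ℝ | y 0 ≤ B₁ ∧ y 1 ≤ B₂}
          ≤ μ {y : Fin 2 → ℝ | y 0 ≤ A₁ i ∧ y 1 ≤ A₂ i}
            + (ν₁ (Set.Ioc (A₁ i) B₁) + ν₂ (Set.Ioc (A₂ i) B₂)) := by
        calc μ {y : Fin 2 → ℝ | y 0 ≤ B₁ ∧ y 1 ≤ B₂}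
            ≤ μ ({y : Fin 2 → ℝ | y 0 ≤ A₁ i ∧ y 1 ≤ A₂ i}
              ∪ ({y : Fin 2 → ℝ | y 0 ∈ Set.Ioc (A₁ i) B₁}
                ∪ {y : Fin 2 → ℝ | y 1 ∈ Set.Ioc (A₂ i) B₂})) := measure_mono hcover
          _ ≤ μ {y : Fin 2 → ℝ | y 0 ≤ A₁ i ∧ y 1 ≤ A₂ i}
              + μ ({y : Fin 2 → ℝ | y 0 ∈ Set.Ioc (A₁ i) B₁}
                ∪ {y : Fin 2 → ℝ | y 1 ∈ Set.Ioc (A₂ i) B₂}) := measure_union_le _ _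
          _ ≤ μ {y : Fin 2 → ℝ | y 0 ≤ A₁ i ∧ y 1 ≤ A₂ i}
              + (μ {y : Fin 2 → ℝ | y 0 ∈ Set.Ioc (A₁ i) B₁}
                + μ {y : Fin 2 → ℝ | y 1 ∈ Set.Ioc (A₂ i) B₂}) :=
            add_le_add_right (measure_union_le _ _) _
          _ ≤ _ := add_le_add_right (add_le_add
              ((hmarg _ measurableSet_Ioc).1) ((hmarg _ measurableSet_Ioc).2)) _
      have hsum_ne : ν₁ (Set.Ioc (A₁ i) B₁) + ν₂ (Set.Ioc (A₂ i) B₂) ≠ ⊤ :=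
        ENNReal.add_ne_top.2 ⟨measure_ne_top _ _, measure_ne_top _ _⟩
      have := ENNReal.toReal_mono (ENNReal.add_ne_top.2 ⟨hfinA _, hsum_ne⟩) hchain
      rw [ENNReal.toReal_add (hfinA _) hsum_ne,
        ENNReal.toReal_add (measure_ne_top _ _) (measure_ne_top _ _)] at this
      have hAi := hA i
      show (μ {y : Fin 2 → ℝ | y 0 ≤ B₁ ∧ y 1 ≤ B₂}).toReal
        ≤ πhi i + (ν₁ (Set.Ioc (A₁ i) B₁)).toReal + (ν₂ (Set.Ioc (A₂ i) B₂)).toReal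
      linarith
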